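/- Let M be a smooth manifold and H a closed (n+1)-form. The brackets on the Hamiltonian algebra Ham*(H), given on degree 0 elements (X,α),(Y,β) (with dα+ι_XH=0, dβ+ι_YH=0) by ⌊(X,α),(Y,β)⌋ = ([X,Y], L_Xβ), satisfy: d(L_Xβ) + ι_{[X,Y]}H = 0, i.e. the bracket of two Hamiltonian pairs is again a Hamiltonian pair. -/
import Mathlib


/-- Abstract Cartan calculus: a Lie algebra `V` of "vector fields" acting on an
ℝ-module `Ω` of "differential forms" by Lie derivative `lie` and contraction `iota`,
with the de Rham differential `d`, satisfying the standard Cartan identities. -/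
structure CartanCtx (V Ω : Type*) [LieRing V] [Module ℝ V]
    [AddCommGroup Ω] [Module ℝ Ω] where
  d : Ω →ₗ[ℝ] Ω
  iota : V →ₗ[ℝ] Ω →ₗ[ℝ] Ω
  lie : V →ₗ[ℝ] Ω →ₗ[ℝ] Ω
  d_d : ∀ ω, d (d ω) = 0
  cartan : ∀ x ω, lie x ω = d (iota x ω) + iota x (d ω)
  lie_d : ∀ x ω, lie x (d ω) = d (lie x ω)
  lie_iota : ∀ x y ω, lie x (iota y ω) - iota y (lie x ω) = iota ⁅x, y⁆ ω
  lie_lie : ∀ x y ω, lie x (lie y ω) - lie y (lie x ω) = lie ⁅x, y⁆ ω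
  iota_iota : ∀ x y ω, iota x (iota y ω) = -iota y (iota x ω)

/-- For `H` a closed `(n+1)`-form, the bracket
`⌊(X,α),(Y,β)⌋ = ([X,Y], L_X β)` of two Hamiltonian pairs (`dα + ι_X H = 0`,
`dβ + ι_Y H = 0`) is again a Hamiltonian pair: `d(L_X β) + ι_{[X,Y]}H = 0`. -/
theorem stmt17 {V Ω : Type*} [LieRing V] [Module ℝ V] [AddCommGroup Ω] [Module ℝ Ω]
    (C : CartanCtx V Ω) (H α β : Ω) (X Y : V)
    (hH : C.d H = 0)
    (hX : C.d α + C.iota X H = 0) (hY : C.d β + C.iota Y H = 0) :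
    C.d (C.lie X β) + C.iota ⁅X, Y⁆ H = 0 := by 
  have hiX : C.iota X H = -C.d α := by linear_combination (norm := abel) hX
  have hiY : C.iota Y H = -C.d β := by linear_combination (norm := abel) hY
  have hLH : C.lie X H = 0 := by
    simp [C.cartan, hH, hiX, C.d_d]
  have h := C.lie_iota X Y H
  rw [hLH, map_zero, hiY, map_neg, sub_zero, ← map_neg] at h
  calc C.d (C.lie X β) + C.iota ⁅X, Y⁆ H
      = C.d (C.lie X β) + C.lie X (-(C.d β)) := by rw [h]
    _ = 0 := by rw [map_neg, C.lie_d, add_neg_cancel]
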